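/- arXiv:1610.02933 — 3 statements merged into one kernel-verified Lean document; each statement's English description precedes it below -/
import Mathlib

section
/- The arcsine function is ε-Lipschitz on [0, 1]: for every ε with 0 < ε < π/2 − 1, there exists τ(ε) ∈ [0, 1) (the unique root on [0,1) of the equation (π/2 − ε − arcsin τ)·√(1 − τ²) = 1 − τ) such that for all x, y ∈ [0, 1], |arcsin x − arcsin y| ≤ (1 − τ(ε)²)^(−1/2)·|x − y| + ε. -/
open Real in
private lemma arcsin_mono1 (τ : ℝ) (h0 : 0 ≤ τ) (h1 : τ < 1) :
    MonotoneOn (fun t => (Real.sqrt (1 - τ ^ 2))⁻¹ * t - Real.arcsin t) (Set.Icc 0 τ) := by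
  set L : ℝ := (Real.sqrt (1 - τ ^ 2))⁻¹ with hL
  have hτ2 : 0 < 1 - τ ^ 2 := by nlinarith
  have hs : 0 < Real.sqrt (1 - τ ^ 2) := Real.sqrt_pos.mpr hτ2
  apply monotoneOn_of_deriv_nonneg (convex_Icc 0 τ)
  · exact ((continuous_const.mul continuous_id).sub Real.continuous_arcsin).continuousOn
  · intro t ht
    rw [interior_Icc] at ht
    exact ((hasDerivAt_id t).const_mul L).sub
      (Real.hasDerivAt_arcsin (by linarith [ht.1]) (by linarith [ht.2, h1])) |>.differentiableAt.differentiableWithinAt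
  · intro t ht
    rw [interior_Icc] at ht
    have hd : deriv (fun t => L * t - Real.arcsin t) t = L * 1 - 1 / Real.sqrt (1 - t ^ 2) :=
      (((hasDerivAt_id t).const_mul L).sub
        (Real.hasDerivAt_arcsin (by linarith [ht.1]) (by linarith [ht.2, h1]))).deriv
    rw [hd]
    have hle : Real.sqrt (1 - τ ^ 2) ≤ Real.sqrt (1 - t ^ 2) := by
      apply Real.sqrt_le_sqrt; nlinarith [ht.1, ht.2]
    have : 1 / Real.sqrt (1 - t ^ 2) ≤ 1 / Real.sqrt (1 - τ ^ 2) :=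
      one_div_le_one_div_of_le hs hle
    rw [hL, inv_eq_one_div]
    linarith

open Real in
private lemma arcsin_mono2 (τ : ℝ) (h0 : 0 ≤ τ) (h1 : τ < 1) :
    MonotoneOn (fun t => Real.arcsin t - (Real.sqrt (1 - τ ^ 2))⁻¹ * t) (Set.Icc τ 1) := by
  set L : ℝ := (Real.sqrt (1 - τ ^ 2))⁻¹ with hL
  have hτ2 : 0 < 1 - τ ^ 2 := by nlinarith
  have hs : 0 < Real.sqrt (1 - τ ^ 2) := Real.sqrt_pos.mpr hτ2
  apply monotoneOn_of_deriv_nonneg (convex_Icc τ 1)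
  · exact (Real.continuous_arcsin.sub (continuous_const.mul continuous_id)).continuousOn
  · intro t ht
    rw [interior_Icc] at ht
    exact ((Real.hasDerivAt_arcsin (by linarith [ht.1]) (by linarith [ht.2])).sub
      ((hasDerivAt_id t).const_mul L)).differentiableAt.differentiableWithinAt
  · intro t ht
    rw [interior_Icc] at ht
    have hd : deriv (fun t => Real.arcsin t - L * t) t = 1 / Real.sqrt (1 - t ^ 2) - L * 1 :=
      ((Real.hasDerivAt_arcsin (by linarith [ht.1]) (by linarith [ht.2])).sub
        ((hasDerivAt_id t).const_mul L)).deriv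
    rw [hd]
    have ht2 : 0 < 1 - t ^ 2 := by nlinarith [ht.1, ht.2]
    have hst : 0 < Real.sqrt (1 - t ^ 2) := Real.sqrt_pos.mpr ht2
    have hle : Real.sqrt (1 - t ^ 2) ≤ Real.sqrt (1 - τ ^ 2) := by
      apply Real.sqrt_le_sqrt; nlinarith [ht.1]
    have : 1 / Real.sqrt (1 - τ ^ 2) ≤ 1 / Real.sqrt (1 - t ^ 2) :=
      one_div_le_one_div_of_le hst hle
    rw [hL, inv_eq_one_div]
    linarith

open Real in
/-- arcsin is ε-Lipschitz on [0,1] with L(ε) = (1 − τ(ε)²)^(−1/2). -/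
theorem arcsin_eps_lipschitz :
    ∀ ε : ℝ, 0 < ε → ε < π / 2 - 1 →
      ∃ τ ∈ Set.Ico (0 : ℝ) 1,
        (π / 2 - ε - Real.arcsin τ) * Real.sqrt (1 - τ ^ 2) = 1 - τ ∧
        ∀ x ∈ Set.Icc (0 : ℝ) 1, ∀ y ∈ Set.Icc (0 : ℝ) 1,
          |Real.arcsin x - Real.arcsin y| ≤ (Real.sqrt (1 - τ ^ 2))⁻¹ * |x - y| + ε := by
  intro ε hε hε'
  have hπ : (1 : ℝ) < π / 2 := by
    have := Real.pi_gt_three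
    linarith
  -- the function g
  set g : ℝ → ℝ := fun t => (π / 2 - ε - Real.arcsin t) * Real.sqrt (1 - t ^ 2) - (1 - t)
    with hg
  have hεπ : ε < π / 2 := by linarith
  have hc0 : 0 < Real.cos ε := Real.cos_pos_of_mem_Ioo ⟨by linarith, hεπ⟩
  have hc1 : Real.cos ε < 1 := by
    have := Real.cos_lt_cos_of_nonneg_of_le_pi (le_refl 0) (by linarith [Real.pi_gt_three]) hε
    simpa using this
  have harccos : Real.arcsin (Real.cos ε) = π / 2 - ε := by
    rw [← Real.sin_pi_div_two_sub]
    exact Real.arcsin_sin (by linarith) (by linarith)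
  have hgc : g (Real.cos ε) = -(1 - Real.cos ε) := by
    simp [hg, harccos]
  have hg0 : g 0 = π / 2 - ε - 1 := by
    simp [hg, Real.arcsin_zero]
  have hcont : ContinuousOn g (Set.Icc 0 (Real.cos ε)) := by
    apply ContinuousOn.sub
    · exact (((continuous_const.sub Real.continuous_arcsin).mul
        ((continuous_const.sub (continuous_pow 2)).sqrt)).continuousOn)
    · exact (continuous_const.sub continuous_id).continuousOn
  have hmem : (0 : ℝ) ∈ Set.Icc (g (Real.cos ε)) (g 0) := by
    constructor
    · rw [hgc]; linarith
    · rw [hg0]; linarith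
  obtain ⟨τ, hτmem, hτ0⟩ := intermediate_value_Icc' (le_of_lt hc0) hcont hmem
  obtain ⟨hτl, hτu⟩ := hτmem
  have hτ1 : τ < 1 := lt_of_le_of_lt hτu hc1
  have heq : (π / 2 - ε - Real.arcsin τ) * Real.sqrt (1 - τ ^ 2) = 1 - τ := by
    have := hτ0
    simp only [hg] at this
    linarith
  refine ⟨τ, ⟨hτl, hτ1⟩, heq, ?_⟩
  set L : ℝ := (Real.sqrt (1 - τ ^ 2))⁻¹ with hL
  have hτ2 : 0 < 1 - τ ^ 2 := by nlinarith
  have hs : 0 < Real.sqrt (1 - τ ^ 2) := Real.sqrt_pos.mpr hτ2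
  have hLpos : 0 < L := inv_pos.mpr hs
  -- key consequence of the equation
  have hkeyeq : π / 2 - Real.arcsin τ = ε + L * (1 - τ) := by
    have : π / 2 - ε - Real.arcsin τ = (1 - τ) * L := by
      field_simp [hL]
      have hLs : L * Real.sqrt (1 - τ ^ 2) = 1 := by rw [hL]; exact inv_mul_cancel₀ hs.ne'
      linear_combination (-2 * (π / 2 - ε - Real.arcsin τ)) * hLs + 2 * L * heq
    linarith [this, mul_comm (1 - τ) L]
  have M1 := arcsin_mono1 τ hτl hτ1
  have M2 := arcsin_mono2 τ hτl hτ1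
  -- key one-sided inequality
  have key : ∀ y x : ℝ, 0 ≤ y → y ≤ x → x ≤ 1 →
      Real.arcsin x - Real.arcsin y ≤ L * (x - y) + ε := by
    intro y x hy hyx hx1
    rcases le_or_gt x τ with hxτ | hxτ
    · -- both in [0, τ]
      have := M1 (Set.mem_Icc.mpr ⟨hy, le_trans hyx hxτ⟩) (Set.mem_Icc.mpr ⟨le_trans hy hyx, hxτ⟩) hyx
      simp only at this
      linarith
    · rcases le_or_gt y τ with hyτ | hyτ
      · -- y ≤ τ < x
        have h1 := M1 (Set.mem_Icc.mpr ⟨hy, hyτ⟩) (Set.mem_Icc.mpr ⟨hτl, le_refl τ⟩) hyτ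
        have h2 := M2 (Set.mem_Icc.mpr ⟨le_of_lt hxτ, hx1⟩)
          (Set.mem_Icc.mpr ⟨by linarith, le_refl 1⟩) hx1
        simp only at h1 h2
        rw [Real.arcsin_one] at h2
        -- h2 : arcsin x - L x ≤ π/2 - L * 1
        linarith [hkeyeq]
      · -- τ < y ≤ x
        have h2 := M2 (Set.mem_Icc.mpr ⟨le_of_lt hxτ, hx1⟩)
          (Set.mem_Icc.mpr ⟨le_trans (le_of_lt hxτ) hx1, le_refl 1⟩) hx1
        have h3 := M2 (Set.mem_Icc.mpr ⟨le_refl τ, by linarith⟩)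
          (Set.mem_Icc.mpr ⟨le_of_lt hyτ, by linarith⟩) (le_of_lt hyτ)
        simp only at h2 h3
        rw [Real.arcsin_one] at h2
        linarith [hkeyeq]
  intro x hx y hy
  rcases le_total y x with h | h
  · rw [abs_of_nonneg (by linarith [Real.monotone_arcsin h] ),
      abs_of_nonneg (by linarith)]
    exact key y x hy.1 h hx.2
  · rw [abs_sub_comm, abs_sub_comm x y,
      abs_of_nonneg (by linarith [Real.monotone_arcsin h]),
      abs_of_nonneg (by linarith)]
    exact key x y hx.1 h hy.2
end

section
/- For every ε with 0 < ε < π/2 − 1, the equation (π/2 − ε − arcsin τ)·√(1 − τ²) = 1 − τ has a unique solution τ(ε) in the interval [0, 1). -/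
private lemma g_deriv (c x : ℝ) (hx0 : 0 < x) (hx1 : x < 1) :
    HasDerivAt (fun t => (c - Real.arcsin t) * Real.sqrt (1 - t ^ 2) + t - 1)
      (-(x * (c - Real.arcsin x) / Real.sqrt (1 - x ^ 2))) x := by
  have h1x2 : 0 < 1 - x ^ 2 := by nlinarith
  have hsq : 0 < Real.sqrt (1 - x ^ 2) := Real.sqrt_pos.mpr h1x2
  have hA : HasDerivAt (fun t => Real.arcsin t) (1 / Real.sqrt (1 - x ^ 2)) x :=
    Real.hasDerivAt_arcsin (by linarith) (by linarith)
  have hB : HasDerivAt (fun t : ℝ => 1 - t ^ 2) (-(2 * x)) x := by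
    simpa using ((hasDerivAt_pow 2 x).const_sub 1)
  have hC : HasDerivAt (fun t => Real.sqrt (1 - t ^ 2))
      (1 / (2 * Real.sqrt (1 - x ^ 2)) * -(2 * x)) x :=
    (Real.hasDerivAt_sqrt (ne_of_gt h1x2)).comp x hB
  have hD := ((hA.const_sub c).mul hC).add_const x
  have hE := (((hA.const_sub c).mul hC).add (hasDerivAt_id x)).sub_const 1
  refine hE.congr_deriv ?_
  have hm : Real.sqrt (1 - x ^ 2) * Real.sqrt (1 - x ^ 2) = 1 - x ^ 2 :=
    Real.mul_self_sqrt h1x2.le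
  field_simp
  ring_nf

open Real in
/-- For 0 < ε < π/2 − 1 the equation (π/2 − ε − arcsin τ)√(1−τ²) = 1 − τ has a
unique root in [0,1). -/
theorem tau_unique_root :
    ∀ ε : ℝ, 0 < ε → ε < π / 2 - 1 →
      ∃! τ : ℝ, τ ∈ Set.Ico (0 : ℝ) 1 ∧
        (π / 2 - ε - Real.arcsin τ) * Real.sqrt (1 - τ ^ 2) = 1 - τ := by
  intro ε hε hε'
  set c : ℝ := π / 2 - ε with hc
  have h1c : 1 < c := by simp [hc]; linarith
  have hcπ : c < π / 2 := by simp [hc]; linarith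
  have hπ : 0 < π := Real.pi_pos
  have hc0 : 0 < c := by linarith
  set s : ℝ := Real.sin c with hsdef
  have hmono := Real.strictMonoOn_sin
  have hs1 : s < 1 := by
    have := hmono (by constructor <;> [linarith [Real.pi_pos]; linarith]) 
      (by constructor <;> [linarith [Real.pi_pos]; linarith]) hcπ
    simpa [Real.sin_pi_div_two] using this
  have hs0 : 0 < s := Real.sin_pos_of_pos_of_lt_pi hc0 (hcπ.trans (half_lt_self hπ))
  have harcs : Real.arcsin s = c := Real.arcsin_sin (by linarith [Real.pi_pos]) hcπ.le
  set g : ℝ → ℝ := fun t => (c - Real.arcsin t) * Real.sqrt (1 - t ^ 2) + t - 1 with hg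
  have hcont : ContinuousOn g (Set.Icc 0 s) := by
    apply Continuous.continuousOn
    exact (((continuous_const.sub Real.continuous_arcsin).mul
      (Real.continuous_sqrt.comp (continuous_const.sub (continuous_pow 2)))).add
      continuous_id).sub continuous_const
  have hanti : StrictAntiOn g (Set.Icc 0 s) := by
    apply strictAntiOn_of_deriv_neg (convex_Icc 0 s) hcont
    intro x hx
    rw [interior_Icc] at hx
    have hx0 := hx.1
    have hx1 : x < 1 := lt_trans hx.2 hs1
    rw [(g_deriv c x hx0 hx1).deriv]
    have h1x2 : 0 < 1 - x ^ 2 := by nlinarith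
    have hsq : 0 < Real.sqrt (1 - x ^ 2) := Real.sqrt_pos.mpr h1x2
    have harc : Real.arcsin x < c := by
      rw [← harcs]
      exact Real.strictMonoOn_arcsin (by constructor <;> linarith)
        (by constructor <;> linarith) hx.2
    have : 0 < x * (c - Real.arcsin x) / Real.sqrt (1 - x ^ 2) :=
      div_pos (mul_pos hx0 (by linarith)) hsq
    linarith
  have hg0 : 0 < g 0 := by simp [hg]; linarith
  have hgs : g s < 0 := by
    have : Real.arcsin s = c := harcs
    simp [hg, this]
    linarith
  -- existence via IVT
  have hIVT := intermediate_value_Icc' hs0.le hcont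
  have h0mem : (0 : ℝ) ∈ Set.Icc (g s) (g 0) := ⟨hgs.le, hg0.le⟩
  obtain ⟨τ, hτmem, hτ0⟩ := hIVT h0mem
  have key : ∀ t, g t = 0 ↔ (c - Real.arcsin t) * Real.sqrt (1 - t ^ 2) = 1 - t := by
    intro t; constructor <;> intro h <;> simp [hg] at * <;> linarith
  refine ⟨τ, ⟨⟨hτmem.1, lt_of_le_of_lt hτmem.2 hs1⟩, (key τ).mp hτ0⟩, ?_⟩
  rintro τ' ⟨⟨h0', h1'⟩, heq'⟩
  have hτ's : τ' ≤ s := by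
    by_contra h
    push_neg at h
    have harc' : c < Real.arcsin τ' := by
      rw [← harcs]
      exact Real.strictMonoOn_arcsin (by constructor <;> linarith)
        (by constructor <;> linarith) h
    have hsq' : 0 ≤ Real.sqrt (1 - τ' ^ 2) := Real.sqrt_nonneg _
    nlinarith [heq']
  exact hanti.injOn ⟨h0', hτ's⟩ hτmem ((key τ').mpr heq' ▸ hτ0.symm ▸ rfl)
end

section
/- The elevation-angle functions ψ_{I,j}(x, y) = π/4 + (−1)^j·(π/4 − (1/2)·arcsin(√(x² + y²)/v²)), j ∈ {1, 2}, are ε-Lipschitz on W_I = {(x, y) : √(x² + y²) ≤ v², x ≥ κ}: for every ε with 2ε ∈ (0, π/2 − 1), |ψ_{I,j}(x₁, y₁) − ψ_{I,j}(x₂, y₂)| ≤ (√2·v²·√(1 − τ(2ε)²))^(−1)·(|x₁ − x₂| + |y₁ − y₂|) + ε, where τ(2ε) is the root in [0,1) of (π/2 − 2ε − arcsin τ)·√(1 − τ²) = 1 − τ. -/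
open Real

private lemma mono_low {τ : ℝ} (h0 : 0 ≤ τ) (h1 : τ < 1) :
    MonotoneOn (fun r => r / Real.sqrt (1 - τ^2) - Real.arcsin r) (Set.Icc 0 τ) := by
  have hc : 0 < Real.sqrt (1 - τ^2) := Real.sqrt_pos.2 (by nlinarith)
  apply monotoneOn_of_deriv_nonneg (convex_Icc 0 τ)
  · exact (continuous_id.div_const _).sub Real.continuous_arcsin |>.continuousOn
  · intro x hx
    rw [interior_Icc] at hx
    exact ((differentiable_id.div_const _).differentiableAt.sub
      ((Real.hasDerivAt_arcsin (by nlinarith [hx.1, hx.2]) (by nlinarith [hx.1, hx.2])).differentiableAt)).differentiableWithinAt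
  · intro x hx
    rw [interior_Icc] at hx
    have hx1 : x ≠ -1 := by nlinarith [hx.1, hx.2]
    have hx2 : x ≠ 1 := by nlinarith [hx.1, hx.2]
    have hd : HasDerivAt (fun r => r / Real.sqrt (1 - τ^2) - Real.arcsin r)
        (1 / Real.sqrt (1 - τ^2) - 1 / Real.sqrt (1 - x^2)) x :=
      ((hasDerivAt_id x).div_const _).sub (Real.hasDerivAt_arcsin hx1 hx2)
    rw [hd.deriv]
    have h : Real.sqrt (1 - τ^2) ≤ Real.sqrt (1 - x^2) :=
      Real.sqrt_le_sqrt (by nlinarith [hx.1, hx.2])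
    have : 1 / Real.sqrt (1 - x^2) ≤ 1 / Real.sqrt (1 - τ^2) :=
      one_div_le_one_div_of_le hc h
    linarith

private lemma mono_high {τ : ℝ} (h0 : 0 ≤ τ) (h1 : τ < 1) :
    MonotoneOn (fun r => Real.arcsin r - r / Real.sqrt (1 - τ^2)) (Set.Icc τ 1) := by
  have hc : 0 < Real.sqrt (1 - τ^2) := Real.sqrt_pos.2 (by nlinarith)
  apply monotoneOn_of_deriv_nonneg (convex_Icc τ 1)
  · exact Real.continuous_arcsin.sub (continuous_id.div_const _) |>.continuousOn
  · intro x hx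
    rw [interior_Icc] at hx
    exact (((Real.hasDerivAt_arcsin (by nlinarith [hx.1, hx.2]) (by nlinarith [hx.1, hx.2])).differentiableAt).sub
      (differentiable_id.div_const _).differentiableAt).differentiableWithinAt
  · intro x hx
    rw [interior_Icc] at hx
    have hx1 : x ≠ -1 := by nlinarith [hx.1, hx.2]
    have hx2 : x ≠ 1 := by nlinarith [hx.1, hx.2]
    have hd : HasDerivAt (fun r => Real.arcsin r - r / Real.sqrt (1 - τ^2))
        (1 / Real.sqrt (1 - x^2) - 1 / Real.sqrt (1 - τ^2)) x :=
      (Real.hasDerivAt_arcsin hx1 hx2).sub ((hasDerivAt_id x).div_const _)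
    rw [hd.deriv]
    have hx0 : 0 < Real.sqrt (1 - x^2) := Real.sqrt_pos.2 (by nlinarith [hx.1, hx.2])
    have h : Real.sqrt (1 - x^2) ≤ Real.sqrt (1 - τ^2) :=
      Real.sqrt_le_sqrt (by nlinarith [hx.1, hx.2])
    have : 1 / Real.sqrt (1 - τ^2) ≤ 1 / Real.sqrt (1 - x^2) :=
      one_div_le_one_div_of_le hx0 h
    linarith

/-- Key estimate: arcsin is (1/√(1-τ²))-Lipschitz up to slack 2ε on [0,1]. -/
private lemma arcsin_key {ε τ : ℝ} (h0 : 0 ≤ τ) (h1 : τ < 1)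
    (heq : (π / 2 - 2 * ε - Real.arcsin τ) * Real.sqrt (1 - τ ^ 2) = 1 - τ)
    (hε : 0 ≤ ε) :
    ∀ a b : ℝ, 0 ≤ a → a ≤ b → b ≤ 1 →
      Real.arcsin b - Real.arcsin a ≤ (b - a) / Real.sqrt (1 - τ^2) + 2 * ε := by
  have hc : 0 < Real.sqrt (1 - τ^2) := Real.sqrt_pos.2 (by nlinarith)
  have hgap : π / 2 - Real.arcsin τ - (1 - τ) / Real.sqrt (1 - τ^2) = 2 * ε := by
    field_simp at heq ⊢; linarith
  have low : ∀ a b : ℝ, 0 ≤ a → a ≤ b → b ≤ τ →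
      Real.arcsin b - Real.arcsin a ≤ (b - a) / Real.sqrt (1 - τ^2) := by
    intro a b ha hab hb
    have := mono_low h0 h1 (Set.mem_Icc.2 ⟨ha, hab.trans hb⟩) (Set.mem_Icc.2 ⟨ha.trans hab, hb⟩) hab
    simp only [div_eq_mul_inv] at this ⊢
    ring_nf at this ⊢
    linarith
  have high : ∀ a b : ℝ, τ ≤ a → a ≤ b → b ≤ 1 →
      Real.arcsin b - Real.arcsin a ≤ (b - a) / Real.sqrt (1 - τ^2) + 2 * ε := by
    intro a b ha hab hb
    have m1 : Real.arcsin τ - τ / Real.sqrt (1 - τ^2)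
        ≤ Real.arcsin a - a / Real.sqrt (1 - τ^2) :=
      mono_high h0 h1 (Set.mem_Icc.2 ⟨le_refl τ, h1.le⟩)
        (Set.mem_Icc.2 ⟨ha, hab.trans hb⟩) ha
    have m2 : Real.arcsin b - b / Real.sqrt (1 - τ^2)
        ≤ Real.arcsin 1 - 1 / Real.sqrt (1 - τ^2) :=
      mono_high h0 h1 (Set.mem_Icc.2 ⟨ha.trans hab, hb⟩)
        (Set.mem_Icc.2 ⟨h1.le, le_refl 1⟩) hb
    rw [Real.arcsin_one] at m2
    have expand : (b - a) / Real.sqrt (1 - τ^2)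
        = b / Real.sqrt (1 - τ^2) - a / Real.sqrt (1 - τ^2) := by ring
    have expand2 : (1 - τ) / Real.sqrt (1 - τ^2)
        = 1 / Real.sqrt (1 - τ^2) - τ / Real.sqrt (1 - τ^2) := by ring
    rw [expand]
    rw [expand2] at hgap
    linarith
  intro a b ha hab hb
  rcases le_or_gt b τ with hbt | hbt
  · exact (low a b ha hab hbt).trans (by linarith)
  rcases le_or_gt τ a with hta | hta
  · exact high a b hta hab hb
  · have h1' := low a τ ha hta.le (le_refl τ)
    have h2' := high τ b (le_refl τ) hbt.le hb
    have : (τ - a) / Real.sqrt (1 - τ^2) + ((b - τ) / Real.sqrt (1 - τ^2) + 2*ε)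
        = (b - a) / Real.sqrt (1 - τ^2) + 2 * ε := by ring
    linarith


private lemma sqrt_diff_le (x₁ y₁ x₂ y₂ : ℝ) :
    |Real.sqrt (x₁ ^ 2 + y₁ ^ 2) - Real.sqrt (x₂ ^ 2 + y₂ ^ 2)| ≤ |x₁ - x₂| + |y₁ - y₂| := by
  have h1 : Real.sqrt (x₁ ^ 2 + y₁ ^ 2) = ‖(⟨x₁, y₁⟩ : ℂ)‖ := by
    rw [Complex.norm_def, Complex.normSq_mk]; ring_nf
  have h2 : Real.sqrt (x₂ ^ 2 + y₂ ^ 2) = ‖(⟨x₂, y₂⟩ : ℂ)‖ := by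
    rw [Complex.norm_def, Complex.normSq_mk]; ring_nf
  rw [h1, h2]
  calc |‖(⟨x₁, y₁⟩ : ℂ)‖ - ‖(⟨x₂, y₂⟩ : ℂ)‖|
      ≤ ‖Complex.mk x₁ y₁ - Complex.mk x₂ y₂‖ :=
        abs_norm_sub_norm_le _ _
    _ ≤ |(Complex.mk x₁ y₁ - Complex.mk x₂ y₂).re| + |(Complex.mk x₁ y₁ - Complex.mk x₂ y₂).im| :=
        Complex.norm_le_abs_re_add_abs_im _
    _ = |x₁ - x₂| + |y₁ - y₂| := by simp


open Real in
/-- The elevation-angle functions ψ_{I,j} are ε-Lipschitz on W_I with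
L(ε) = (√2 · v² · √(1 − τ(2ε)²))⁻¹. -/
theorem psi_I_eps_lipschitz (v κ : ℝ) (hv : 0 < v) (hκ : 0 < κ) (hκv : κ ≤ v ^ 2) :
    ∀ ε : ℝ, 0 < 2 * ε → 2 * ε < π / 2 - 1 →
      ∀ τ : ℝ, τ ∈ Set.Ico (0 : ℝ) 1 →
        (π / 2 - 2 * ε - Real.arcsin τ) * Real.sqrt (1 - τ ^ 2) = 1 - τ →
      ∀ j ∈ ({1, 2} : Set ℕ),
      ∀ x₁ y₁ x₂ y₂ : ℝ,
        Real.sqrt (x₁ ^ 2 + y₁ ^ 2) ≤ v ^ 2 → κ ≤ x₁ →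
        Real.sqrt (x₂ ^ 2 + y₂ ^ 2) ≤ v ^ 2 → κ ≤ x₂ →
        |(π / 4 + (-1 : ℝ) ^ j * (π / 4
            - (1 / 2) * Real.arcsin (Real.sqrt (x₁ ^ 2 + y₁ ^ 2) / v ^ 2)))
          - (π / 4 + (-1 : ℝ) ^ j * (π / 4
            - (1 / 2) * Real.arcsin (Real.sqrt (x₂ ^ 2 + y₂ ^ 2) / v ^ 2)))|
        ≤ (Real.sqrt 2 * v ^ 2 * Real.sqrt (1 - τ ^ 2))⁻¹ * (|x₁ - x₂| + |y₁ - y₂|) + ε := by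
  intro ε hε1 hε2 τ hτ heq j hj x₁ y₁ x₂ y₂ h1 hx1 h2 hx2
  obtain ⟨h0, h1'⟩ := hτ
  have hεpos : 0 < ε := by linarith
  have hc : 0 < Real.sqrt (1 - τ ^ 2) := Real.sqrt_pos.2 (by nlinarith)
  have hv2 : (0:ℝ) < v ^ 2 := by positivity
  set c := Real.sqrt (1 - τ ^ 2) with hcdef
  set S₁ := Real.sqrt (x₁ ^ 2 + y₁ ^ 2) with hS₁
  set S₂ := Real.sqrt (x₂ ^ 2 + y₂ ^ 2) with hS₂
  have hS₁0 : 0 ≤ S₁ := Real.sqrt_nonneg _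
  have hS₂0 : 0 ≤ S₂ := Real.sqrt_nonneg _
  set r₁ := S₁ / v ^ 2 with hr₁
  set r₂ := S₂ / v ^ 2 with hr₂
  set D := |x₁ - x₂| + |y₁ - y₂| with hDdef
  have hD : 0 ≤ D := by positivity
  have hr₁0 : 0 ≤ r₁ := by positivity
  have hr₂0 : 0 ≤ r₂ := by positivity
  have hr₁1 : r₁ ≤ 1 := (div_le_one hv2).2 h1
  have hr₂1 : r₂ ≤ 1 := (div_le_one hv2).2 h2
  have lhs_eq : |(π / 4 + (-1 : ℝ) ^ j * (π / 4 - (1 / 2) * Real.arcsin r₁))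
      - (π / 4 + (-1 : ℝ) ^ j * (π / 4 - (1 / 2) * Real.arcsin r₂))|
      = (1/2) * |Real.arcsin r₁ - Real.arcsin r₂| := by
    have e : (π / 4 + (-1 : ℝ) ^ j * (π / 4 - (1 / 2) * Real.arcsin r₁))
        - (π / 4 + (-1 : ℝ) ^ j * (π / 4 - (1 / 2) * Real.arcsin r₂))
        = (-1 : ℝ) ^ j * ((1/2) * (Real.arcsin r₂ - Real.arcsin r₁)) := by ring
    rw [e, abs_mul, abs_pow, abs_neg, abs_one, one_pow, one_mul, abs_mul,
      abs_sub_comm (Real.arcsin r₂)]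
    norm_num
  rw [lhs_eq]
  have hrd : |r₁ - r₂| ≤ D / v ^ 2 := by
    have e : |r₁ - r₂| = |S₁ - S₂| / v ^ 2 := by
      rw [hr₁, hr₂, div_sub_div_same, abs_div, abs_of_pos hv2]
    rw [e]
    gcongr
    exact sqrt_diff_le x₁ y₁ x₂ y₂
  have key : |Real.arcsin r₁ - Real.arcsin r₂| ≤ |r₁ - r₂| / c + 2 * ε := by
    rcases le_total r₁ r₂ with h | h
    · have hk := arcsin_key h0 h1' heq hεpos.le r₁ r₂ hr₁0 h hr₂1
      have hm : Real.arcsin r₁ ≤ Real.arcsin r₂ := Real.monotone_arcsin h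
      rw [abs_sub_comm, abs_of_nonneg (by linarith : (0:ℝ) ≤ Real.arcsin r₂ - Real.arcsin r₁),
        abs_sub_comm, abs_of_nonneg (by linarith : (0:ℝ) ≤ r₂ - r₁)]
      exact hk
    · have hk := arcsin_key h0 h1' heq hεpos.le r₂ r₁ hr₂0 h hr₁1
      have hm : Real.arcsin r₂ ≤ Real.arcsin r₁ := Real.monotone_arcsin h
      rw [abs_of_nonneg (by linarith : (0:ℝ) ≤ Real.arcsin r₁ - Real.arcsin r₂),
        abs_of_nonneg (by linarith : (0:ℝ) ≤ r₁ - r₂)]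
      exact hk
  have step1 : |r₁ - r₂| / c ≤ D / v ^ 2 / c := by gcongr
  have e1 : (1/2) * (D / v ^ 2 / c + 2 * ε) = (2 * v ^ 2 * c)⁻¹ * D + ε := by
    field_simp
  have hs2 : Real.sqrt 2 ≤ 2 := by
    nlinarith [Real.sq_sqrt (by norm_num : (0:ℝ) ≤ 2), Real.sqrt_nonneg 2]
  have e2 : (2 * v ^ 2 * c)⁻¹ ≤ (Real.sqrt 2 * v ^ 2 * c)⁻¹ := by
    apply inv_anti₀ (by positivity)
    have : Real.sqrt 2 * (v ^ 2 * c) ≤ 2 * (v ^ 2 * c) :=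
      mul_le_mul_of_nonneg_right hs2 (by positivity)
    linarith [this]
  have e3 : (2 * v ^ 2 * c)⁻¹ * D ≤ (Real.sqrt 2 * v ^ 2 * c)⁻¹ * D :=
    mul_le_mul_of_nonneg_right e2 hD
  linarith
end
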